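/- arXiv:1006.0075 — 4 statements merged into one kernel-verified Lean document; each statement's English description precedes it below -/
import Mathlib

section
/- For each n ∈ ℤ define F-linear operators on A ⊕ A by L_n(f, g) = (X^{n+1} ∂f, X^{n+1} ∂g) and W_n(f, g) = (0, X^{n+1} ∂f) (realizing L_n = (a⁺)^{n+1} a and W_n = (a⁺)^{n+1} b⁺ a with b(f,g) = (g, 0) and b⁺(f,g) = (0, f)). Then for all m, n ∈ ℤ: L_m ∘ L_n − L_n ∘ L_m = (n − m) L_{m+n}, L_m ∘ W_n − W_n ∘ L_m = (n − m) W_{m+n}, and W_m ∘ W_n − W_n ∘ W_m = 0; i.e. these operators realize the W(2,2) Lie algebra. -/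
open LaurentPolynomial

lemma smul_T_eq {F : Type*} [Field F] (a : F) (n : ℤ) :
    a • (T n : LaurentPolynomial F) = C a * T n := by
  rw [← single_eq_C_mul_T, T, AddMonoidAlgebra.smul_single, smul_eq_mul, mul_one]

/-- Two endomorphisms of `A ⊕ A` agreeing on `(T k, 0)` and `(0, T k)` are equal. -/
lemma end_ext {F : Type*} [Field F]
    (φ ψ : Module.End F (LaurentPolynomial F × LaurentPolynomial F))
    (h1 : ∀ k : ℤ, φ (T k, 0) = ψ (T k, 0))
    (h2 : ∀ k : ℤ, φ (0, T k) = ψ (0, T k)) : φ = ψ := by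
  have key1 : ∀ f : LaurentPolynomial F, φ (f, 0) = ψ (f, 0) := by
    intro f
    induction f using LaurentPolynomial.induction_on' with
    | add p q hp hq =>
        have : ((p + q : LaurentPolynomial F), (0 : LaurentPolynomial F))
            = (p, 0) + (q, 0) := by simp
        rw [this, map_add, map_add, hp, hq]
    | C_mul_T n a =>
        have : ((C a * T n : LaurentPolynomial F), (0 : LaurentPolynomial F))
            = a • (T n, 0) := by
          rw [Prod.smul_mk, smul_T_eq, smul_zero]
        rw [this, map_smul, map_smul, h1]
  have key2 : ∀ f : LaurentPolynomial F, φ (0, f) = ψ (0, f) := by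
    intro f
    induction f using LaurentPolynomial.induction_on' with
    | add p q hp hq =>
        have : ((0 : LaurentPolynomial F), (p + q : LaurentPolynomial F))
            = (0, p) + (0, q) := by simp
        rw [this, map_add, map_add, hp, hq]
    | C_mul_T n a =>
        have : ((0 : LaurentPolynomial F), (C a * T n : LaurentPolynomial F))
            = a • (0, T n) := by
          rw [Prod.smul_mk, smul_T_eq, smul_zero]
        rw [this, map_smul, map_smul, h2]
  apply LinearMap.ext
  intro fg
  have : fg = (fg.1, 0) + (0, fg.2) := by simp
  rw [this, map_add, map_add, key1, key2]

/-- Realization of the `W(2,2)` Lie algebra on `A ⊕ A` via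
the bosonic oscillator `a = D`, `a⁺ = M_X` and fermionic oscillators
`b (f,g) = (g,0)`, `b⁺ (f,g) = (0,f)`:
`L n = (a⁺)^{n+1} a` (componentwise) and `W n = (a⁺)^{n+1} b⁺ a`. -/
theorem stmt1 (F : Type*) [Field F] [CharZero F]
    (D : Module.End F (LaurentPolynomial F))
    (hD : ∀ k : ℤ, D (T k) = (k : F) • T (k - 1))
    (L W : ℤ → Module.End F (LaurentPolynomial F × LaurentPolynomial F))
    (hL : ∀ (n : ℤ) (fg : LaurentPolynomial F × LaurentPolynomial F),
      L n fg = (T (n + 1) * D fg.1, T (n + 1) * D fg.2))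
    (hW : ∀ (n : ℤ) (fg : LaurentPolynomial F × LaurentPolynomial F),
      W n fg = (0, T (n + 1) * D fg.1)) :
    ∀ m n : ℤ,
      L m * L n - L n * L m = ((n - m : ℤ) : F) • L (m + n) ∧
      L m * W n - W n * L m = ((n - m : ℤ) : F) • W (m + n) ∧
      W m * W n - W n * W m = 0 := by
  have hTT : ∀ n k : ℤ, (T (n + 1) * ((k : F) • T (k - 1)) : LaurentPolynomial F)
      = (k : F) • T (n + k) := by
    intro n k
    rw [mul_smul_comm, ← T_add]
    ring_nf
  have hL1 : ∀ n k : ℤ, L n ((T k : LaurentPolynomial F), 0)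
      = (k : F) • ((T (n + k) : LaurentPolynomial F), (0 : LaurentPolynomial F)) := by
    intro n k
    rw [hL, Prod.smul_mk, smul_zero]
    simp [hD, hTT]
  have hL2 : ∀ n k : ℤ, L n ((0 : LaurentPolynomial F), T k)
      = (k : F) • ((0 : LaurentPolynomial F), (T (n + k) : LaurentPolynomial F)) := by
    intro n k
    rw [hL, Prod.smul_mk, smul_zero]
    simp [hD, hTT]
  have hW1 : ∀ n k : ℤ, W n ((T k : LaurentPolynomial F), 0)
      = (k : F) • ((0 : LaurentPolynomial F), (T (n + k) : LaurentPolynomial F)) := by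
    intro n k
    rw [hW, Prod.smul_mk, smul_zero]
    simp [hD, hTT]
  have hW2 : ∀ n k : ℤ, W n ((0 : LaurentPolynomial F), T k) = 0 := by
    intro n k
    rw [hW]
    simp
  intro m n
  refine ⟨?_, ?_, ?_⟩
  · apply end_ext <;> intro k
    · rw [LinearMap.sub_apply, Module.End.mul_apply, Module.End.mul_apply,
        LinearMap.smul_apply, hL1, hL1, map_smul, map_smul, hL1, hL1, hL1,
        show m + (n + k) = m + n + k by ring, show n + (m + k) = m + n + k by ring,
        smul_smul, smul_smul, smul_smul, ← sub_smul]
      congr 1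
      push_cast
      ring
    · rw [LinearMap.sub_apply, Module.End.mul_apply, Module.End.mul_apply,
        LinearMap.smul_apply, hL2, hL2, map_smul, map_smul, hL2, hL2, hL2,
        show m + (n + k) = m + n + k by ring, show n + (m + k) = m + n + k by ring,
        smul_smul, smul_smul, smul_smul, ← sub_smul]
      congr 1
      push_cast
      ring
  · apply end_ext <;> intro k
    · rw [LinearMap.sub_apply, Module.End.mul_apply, Module.End.mul_apply,
        LinearMap.smul_apply, hW1, hL1, map_smul, map_smul, hL2, hW1, hW1,
        show m + (n + k) = m + n + k by ring, show n + (m + k) = m + n + k by ring,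
        smul_smul, smul_smul, smul_smul, ← sub_smul]
      congr 1
      push_cast
      ring
    · rw [LinearMap.sub_apply, Module.End.mul_apply, Module.End.mul_apply,
        LinearMap.smul_apply, hW2, hL2, map_zero, map_smul, hW2, hW2]
      simp
  · apply end_ext <;> intro k
    · rw [LinearMap.sub_apply, Module.End.mul_apply, Module.End.mul_apply,
        hW1, hW1, map_smul, map_smul, hW2, hW2, LinearMap.zero_apply]
      simp
    · rw [LinearMap.sub_apply, Module.End.mul_apply, Module.End.mul_apply,
        hW2, hW2, map_zero, map_zero, LinearMap.zero_apply]
      simp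
end

section
/- The algebra U_q is nontrivial; that is, 1 ≠ 0 in U_q (equivalently, the two-sided ideal of the free associative algebra generated by the relations (R1)–(R6) is a proper ideal). -/
open scoped TensorProduct

/-- Generators of the algebra `U_q`: `T`, `T⁻¹`, `L n`, `W n` (`n ∈ ℤ`). -/
inductive WGen : Type
  | T : WGen
  | Tinv : WGen
  | L : ℤ → WGen
  | W : ℤ → WGen

/-- The `q`-integer `[k]_q = (q^k − q^{−k})/(q − q⁻¹)`. -/
noncomputable def qInt {F : Type*} [Field F] (q : F) (k : ℤ) : F :=
  (q ^ k - q ^ (-k)) / (q - q⁻¹)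

/-- `T^m` in the free algebra, with `T^{−k}` meaning `(T⁻¹)^k`. -/
noncomputable def Tp (F : Type*) [Field F] (m : ℤ) : FreeAlgebra F WGen :=
  if 0 ≤ m then (FreeAlgebra.ι F WGen.T) ^ m.toNat
  else (FreeAlgebra.ι F WGen.Tinv) ^ (-m).toNat

/-- The defining relations (R1)–(R6) of `U_q`. -/
inductive WRel (F : Type*) [Field F] (q : F) :
    FreeAlgebra F WGen → FreeAlgebra F WGen → Prop
  | r1a : WRel F q (FreeAlgebra.ι F WGen.T * FreeAlgebra.ι F WGen.Tinv) 1
  | r1b : WRel F q (FreeAlgebra.ι F WGen.Tinv * FreeAlgebra.ι F WGen.T) 1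
  | r2 (m n : ℤ) : WRel F q (Tp F m * FreeAlgebra.ι F (WGen.L n))
      ((q ^ (-2 * (n + 1) * m)) • (FreeAlgebra.ι F (WGen.L n) * Tp F m))
  | r3 (m n : ℤ) : WRel F q (Tp F m * FreeAlgebra.ι F (WGen.W n))
      ((q ^ (-2 * (n + 1) * m)) • (FreeAlgebra.ι F (WGen.W n) * Tp F m))
  | r4 (m n : ℤ) : WRel F q
      ((q ^ (n - m)) • (FreeAlgebra.ι F (WGen.L n) * FreeAlgebra.ι F (WGen.L m))
        - (q ^ (m - n)) • (FreeAlgebra.ι F (WGen.L m) * FreeAlgebra.ι F (WGen.L n)))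
      (qInt q (m - n) • FreeAlgebra.ι F (WGen.L (m + n)))
  | r5 (m n : ℤ) : WRel F q
      ((q ^ (n - m)) • (FreeAlgebra.ι F (WGen.L n) * FreeAlgebra.ι F (WGen.W m))
        - (q ^ (m - n)) • (FreeAlgebra.ι F (WGen.W m) * FreeAlgebra.ι F (WGen.L n)))
      (qInt q (m - n) • FreeAlgebra.ι F (WGen.W (m + n)))
  | r6 (m n : ℤ) : WRel F q
      ((q ^ (n - m)) • (FreeAlgebra.ι F (WGen.W n) * FreeAlgebra.ι F (WGen.W m))
        - (q ^ (m - n)) • (FreeAlgebra.ι F (WGen.W m) * FreeAlgebra.ι F (WGen.W n)))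
      0

/-- The algebra `U_q`, presented by generators `T, T⁻¹, L n, W n` and relations (R1)–(R6). -/
abbrev Uq (F : Type*) [Field F] (q : F) : Type _ := RingQuot (WRel F q)

/-- The image of the generator `T` in `U_q`. -/
noncomputable def UT (F : Type*) [Field F] (q : F) : Uq F q :=
  RingQuot.mkAlgHom F (WRel F q) (FreeAlgebra.ι F WGen.T)

/-- The image of the generator `T⁻¹` in `U_q`. -/
noncomputable def UTinv (F : Type*) [Field F] (q : F) : Uq F q :=
  RingQuot.mkAlgHom F (WRel F q) (FreeAlgebra.ι F WGen.Tinv)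

/-- The image of the generator `L n` in `U_q`. -/
noncomputable def UL (F : Type*) [Field F] (q : F) (n : ℤ) : Uq F q :=
  RingQuot.mkAlgHom F (WRel F q) (FreeAlgebra.ι F (WGen.L n))

/-- The image of the generator `W n` in `U_q`. -/
noncomputable def UW (F : Type*) [Field F] (q : F) (n : ℤ) : Uq F q :=
  RingQuot.mkAlgHom F (WRel F q) (FreeAlgebra.ι F (WGen.W n))

/-- `T^m` in `U_q` for `m ∈ ℤ`, with `T^{−k}` meaning `(T⁻¹)^k`. -/
noncomputable def UTz (F : Type*) [Field F] (q : F) (m : ℤ) : Uq F q :=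
  RingQuot.mkAlgHom F (WRel F q) (Tp F m)

/-- The algebra `U_q` is nontrivial, i.e. `1 ≠ 0` in `U_q`
(equivalently, the two-sided ideal generated by the relations (R1)–(R6)
is a proper ideal of the free algebra). -/
theorem stmt6 (F : Type*) [Field F] [CharZero F] (q : F) (hq : q ≠ 0)
    (hqroot : ∀ k : ℕ, 0 < k → q ^ k ≠ 1) :
    (1 : Uq F q) ≠ 0 := by
  -- Build an algebra hom `U_q → F` via T, T⁻¹ ↦ 1, L n, W n ↦ 0.
  set f : WGen → F := fun g => match g with
    | WGen.T => 1
    | WGen.Tinv => 1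
    | WGen.L _ => 0
    | WGen.W _ => 0 with hf
  set φ : FreeAlgebra F WGen →ₐ[F] F := FreeAlgebra.lift F f with hφ
  have hT : φ (FreeAlgebra.ι F WGen.T) = 1 := by simp [hφ, hf]
  have hTi : φ (FreeAlgebra.ι F WGen.Tinv) = 1 := by simp [hφ, hf]
  have hL : ∀ n, φ (FreeAlgebra.ι F (WGen.L n)) = 0 := by intro n; simp [hφ, hf]
  have hW : ∀ n, φ (FreeAlgebra.ι F (WGen.W n)) = 0 := by intro n; simp [hφ, hf]
  have hTp : ∀ m : ℤ, φ (Tp F m) = 1 := by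
    intro m
    unfold Tp
    split <;> simp [map_pow, hT, hTi]
  have hrel : ∀ ⦃x y⦄, WRel F q x y → φ x = φ y := by
    intro x y h
    induction h with
    | r1a => simp [hT, hTi]
    | r1b => simp [hT, hTi]
    | r2 m n => simp [hTp, hL]
    | r3 m n => simp [hTp, hW]
    | r4 m n => simp [hL]
    | r5 m n => simp [hL, hW]
    | r6 m n => simp [hW]
  set ψ : Uq F q →ₐ[F] F := RingQuot.liftAlgHom F ⟨φ, hrel⟩
  intro h0
  have : (1 : F) = 0 := by
    calc (1 : F) = ψ 1 := (map_one ψ).symm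
    _ = ψ 0 := by rw [h0]
    _ = 0 := map_zero ψ
  exact one_ne_zero this
end

section
/- There is a unique homomorphism of unital F-algebras Δ : U_q → U_q ⊗_F U_q satisfying Δ(T) = T ⊗ T, Δ(T⁻¹) = T⁻¹ ⊗ T⁻¹, Δ(L_n) = L_n ⊗ T^n + T^n ⊗ L_n, and Δ(W_n) = W_n ⊗ T^n + T^n ⊗ W_n for all n ∈ ℤ. -/
open scoped TensorProduct

section Aux
variable {F : Type*} [Field F] {q : F}

lemma mk_rel {a b : FreeAlgebra F WGen} (h : WRel F q a b) :
    RingQuot.mkAlgHom F (WRel F q) a = RingQuot.mkAlgHom F (WRel F q) b :=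
  RingQuot.mkAlgHom_rel F h

lemma hTTinv : UT F q * UTinv F q = 1 := by
  have := mk_rel (q := q) WRel.r1a
  simpa [UT, UTinv, map_mul, map_one] using this

lemma hTinvT : UTinv F q * UT F q = 1 := by
  have := mk_rel (q := q) WRel.r1b
  simpa [UT, UTinv, map_mul, map_one] using this

end Aux

/-- The unit of `Uq` given by `T`. -/
noncomputable def uU (F : Type*) [Field F] (q : F) : (Uq F q)ˣ :=
  ⟨UT F q, UTinv F q, hTTinv, hTinvT⟩

section Aux2
variable {F : Type*} [Field F] {q : F}

lemma UTz_eq (m : ℤ) : UTz F q m = ((uU F q ^ m : (Uq F q)ˣ) : Uq F q) := by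
  unfold UTz Tp
  rcases le_or_gt 0 m with h | h
  · rw [if_pos h, map_pow]
    conv_rhs => rw [← Int.toNat_of_nonneg h]
    rw [zpow_natCast, Units.val_pow_eq_pow_val]
    rfl
  · rw [if_neg (not_le.mpr h), map_pow]
    have hm : m = -((-m).toNat : ℤ) := by omega
    conv_rhs => rw [hm]
    rw [zpow_neg, ← inv_zpow, zpow_natCast, Units.val_pow_eq_pow_val]
    rfl

lemma UTz_mul (m n : ℤ) : UTz F q m * UTz F q n = UTz F q (m + n) := by
  rw [UTz_eq, UTz_eq, UTz_eq, ← Units.val_mul, ← zpow_add]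

lemma UTz_L (m n : ℤ) :
    UTz F q m * UL F q n = (q ^ (-2 * (n + 1) * m)) • (UL F q n * UTz F q m) := by
  have := mk_rel (q := q) (WRel.r2 m n)
  simpa [UTz, UL, map_mul, map_smul] using this

lemma UTz_W (m n : ℤ) :
    UTz F q m * UW F q n = (q ^ (-2 * (n + 1) * m)) • (UW F q n * UTz F q m) := by
  have := mk_rel (q := q) (WRel.r3 m n)
  simpa [UTz, UW, map_mul, map_smul] using this

lemma rel4 (m n : ℤ) :
    (q ^ (n - m)) • (UL F q n * UL F q m) - (q ^ (m - n)) • (UL F q m * UL F q n)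
      = qInt q (m - n) • UL F q (m + n) := by
  have := mk_rel (q := q) (WRel.r4 m n)
  simpa [UL, map_mul, map_smul, map_sub] using this

lemma rel5 (m n : ℤ) :
    (q ^ (n - m)) • (UL F q n * UW F q m) - (q ^ (m - n)) • (UW F q m * UL F q n)
      = qInt q (m - n) • UW F q (m + n) := by
  have := mk_rel (q := q) (WRel.r5 m n)
  simpa [UL, UW, map_mul, map_smul, map_sub] using this

lemma rel6 (m n : ℤ) :
    (q ^ (n - m)) • (UW F q n * UW F q m) - (q ^ (m - n)) • (UW F q m * UW F q n)
      = 0 := by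
  have := mk_rel (q := q) (WRel.r6 m n)
  simpa [UW, map_mul, map_smul, map_sub] using this

end Aux2

/-- Values of the coproduct on generators. -/
noncomputable def fgen (F : Type*) [Field F] (q : F) : WGen → (Uq F q ⊗[F] Uq F q)
  | .T => UT F q ⊗ₜ[F] UT F q
  | .Tinv => UTinv F q ⊗ₜ[F] UTinv F q
  | .L n => UL F q n ⊗ₜ[F] UTz F q n + UTz F q n ⊗ₜ[F] UL F q n
  | .W n => UW F q n ⊗ₜ[F] UTz F q n + UTz F q n ⊗ₜ[F] UW F q n

section Aux3
variable {F : Type*} [Field F] {q : F}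

lemma lift_Tp (m : ℤ) :
    (FreeAlgebra.lift F (fgen F q)) (Tp F m) = UTz F q m ⊗ₜ[F] UTz F q m := by
  unfold UTz Tp
  rcases le_or_gt 0 m with h | h
  · rw [if_pos h, map_pow, map_pow, FreeAlgebra.lift_ι_apply]
    show (fgen F q WGen.T) ^ _ = _
    rw [show fgen F q WGen.T = UT F q ⊗ₜ[F] UT F q from rfl,
      Algebra.TensorProduct.tmul_pow]
    rfl
  · rw [if_neg (not_le.mpr h), map_pow, map_pow, FreeAlgebra.lift_ι_apply]
    show (fgen F q WGen.Tinv) ^ _ = _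
    rw [show fgen F q WGen.Tinv = UTinv F q ⊗ₜ[F] UTinv F q from rfl,
      Algebra.TensorProduct.tmul_pow]
    rfl

end Aux3
section Main
variable {F : Type*} [Field F] {q : F}

lemma rel_check (hq : q ≠ 0) : ∀ ⦃a b : FreeAlgebra F WGen⦄, WRel F q a b →
    (FreeAlgebra.lift F (fgen F q)) a = (FreeAlgebra.lift F (fgen F q)) b := by
  intro a b h
  induction h with
  | r1a =>
      simp [FreeAlgebra.lift_ι_apply, fgen, Algebra.TensorProduct.tmul_mul_tmul,
        hTTinv, Algebra.TensorProduct.one_def]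
  | r1b =>
      simp [FreeAlgebra.lift_ι_apply, fgen, Algebra.TensorProduct.tmul_mul_tmul,
        hTinvT, Algebra.TensorProduct.one_def]
  | r2 m n =>
      simp only [map_mul, map_smul, lift_Tp, FreeAlgebra.lift_ι_apply, fgen]
      simp only [mul_add, add_mul, Algebra.TensorProduct.tmul_mul_tmul,
        UTz_L, UTz_mul, smul_add, TensorProduct.smul_tmul', TensorProduct.tmul_smul,
        add_comm n m]
  | r3 m n =>
      simp only [map_mul, map_smul, lift_Tp, FreeAlgebra.lift_ι_apply, fgen]
      simp only [mul_add, add_mul, Algebra.TensorProduct.tmul_mul_tmul,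
        UTz_W, UTz_mul, smul_add, TensorProduct.smul_tmul', TensorProduct.tmul_smul,
        add_comm n m]
  | r4 m n =>
      simp only [map_sub, map_smul, map_mul, FreeAlgebra.lift_ι_apply, fgen]
      have h4 := rel4 (q := q) m n
      have hnm : UTz F q n * UTz F q m = UTz F q (m + n) := by rw [UTz_mul, add_comm]
      have hmn : UTz F q m * UTz F q n = UTz F q (m + n) := UTz_mul m n
      have hc1 : UTz F q n * UL F q m
          = (q ^ (-2 * (m + 1) * n)) • (UL F q m * UTz F q n) := UTz_L n m
      have hc2 : UTz F q m * UL F q n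
          = (q ^ (-2 * (n + 1) * m)) • (UL F q n * UTz F q m) := UTz_L m n
      calc (q ^ (n - m)) •
            ((UL F q n ⊗ₜ[F] UTz F q n + UTz F q n ⊗ₜ[F] UL F q n) *
             (UL F q m ⊗ₜ[F] UTz F q m + UTz F q m ⊗ₜ[F] UL F q m))
          - (q ^ (m - n)) •
            ((UL F q m ⊗ₜ[F] UTz F q m + UTz F q m ⊗ₜ[F] UL F q m) *
             (UL F q n ⊗ₜ[F] UTz F q n + UTz F q n ⊗ₜ[F] UL F q n))
          = ((q ^ (n - m)) • (UL F q n * UL F q m)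
              - (q ^ (m - n)) • (UL F q m * UL F q n)) ⊗ₜ[F] UTz F q (m + n)
            + UTz F q (m + n) ⊗ₜ[F]
              ((q ^ (n - m)) • (UL F q n * UL F q m)
              - (q ^ (m - n)) • (UL F q m * UL F q n)) := by
            simp only [mul_add, add_mul, Algebra.TensorProduct.tmul_mul_tmul,
              hnm, hmn, hc1, hc2, smul_add, smul_sub, TensorProduct.sub_tmul,
              TensorProduct.tmul_sub, TensorProduct.add_tmul, TensorProduct.tmul_add,
              ← TensorProduct.smul_tmul', TensorProduct.tmul_smul, smul_smul]
            match_scalars <;>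
              · simp only [mul_one, one_mul, ← zpow_add₀ hq]
                try ring
                try (congr 1; ring)
        _ = _ := by
            rw [h4]
            simp [smul_add, TensorProduct.smul_tmul', TensorProduct.tmul_smul]
  | r5 m n =>
      simp only [map_sub, map_smul, map_mul, FreeAlgebra.lift_ι_apply, fgen]
      have h5 := rel5 (q := q) m n
      have hnm : UTz F q n * UTz F q m = UTz F q (m + n) := by rw [UTz_mul, add_comm]
      have hmn : UTz F q m * UTz F q n = UTz F q (m + n) := UTz_mul m n
      have hc1 : UTz F q n * UW F q m
          = (q ^ (-2 * (m + 1) * n)) • (UW F q m * UTz F q n) := UTz_W n m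
      have hc2 : UTz F q m * UL F q n
          = (q ^ (-2 * (n + 1) * m)) • (UL F q n * UTz F q m) := UTz_L m n
      calc (q ^ (n - m)) •
            ((UL F q n ⊗ₜ[F] UTz F q n + UTz F q n ⊗ₜ[F] UL F q n) *
             (UW F q m ⊗ₜ[F] UTz F q m + UTz F q m ⊗ₜ[F] UW F q m))
          - (q ^ (m - n)) •
            ((UW F q m ⊗ₜ[F] UTz F q m + UTz F q m ⊗ₜ[F] UW F q m) *
             (UL F q n ⊗ₜ[F] UTz F q n + UTz F q n ⊗ₜ[F] UL F q n))
          = ((q ^ (n - m)) • (UL F q n * UW F q m)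
              - (q ^ (m - n)) • (UW F q m * UL F q n)) ⊗ₜ[F] UTz F q (m + n)
            + UTz F q (m + n) ⊗ₜ[F]
              ((q ^ (n - m)) • (UL F q n * UW F q m)
              - (q ^ (m - n)) • (UW F q m * UL F q n)) := by
            simp only [mul_add, add_mul, Algebra.TensorProduct.tmul_mul_tmul,
              hnm, hmn, hc1, hc2, smul_add, smul_sub, TensorProduct.sub_tmul,
              TensorProduct.tmul_sub, TensorProduct.add_tmul, TensorProduct.tmul_add,
              ← TensorProduct.smul_tmul', TensorProduct.tmul_smul, smul_smul]
            match_scalars <;>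
              · simp only [mul_one, one_mul, ← zpow_add₀ hq]
                try ring
                try (congr 1; ring)
        _ = _ := by
            rw [h5]
            simp [smul_add, TensorProduct.smul_tmul', TensorProduct.tmul_smul]
  | r6 m n =>
      simp only [map_sub, map_smul, map_mul, FreeAlgebra.lift_ι_apply, fgen, map_zero]
      have h6 := rel6 (q := q) m n
      have hnm : UTz F q n * UTz F q m = UTz F q (m + n) := by rw [UTz_mul, add_comm]
      have hmn : UTz F q m * UTz F q n = UTz F q (m + n) := UTz_mul m n
      have hc1 : UTz F q n * UW F q m
          = (q ^ (-2 * (m + 1) * n)) • (UW F q m * UTz F q n) := UTz_W n m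
      have hc2 : UTz F q m * UW F q n
          = (q ^ (-2 * (n + 1) * m)) • (UW F q n * UTz F q m) := UTz_W m n
      calc (q ^ (n - m)) •
            ((UW F q n ⊗ₜ[F] UTz F q n + UTz F q n ⊗ₜ[F] UW F q n) *
             (UW F q m ⊗ₜ[F] UTz F q m + UTz F q m ⊗ₜ[F] UW F q m))
          - (q ^ (m - n)) •
            ((UW F q m ⊗ₜ[F] UTz F q m + UTz F q m ⊗ₜ[F] UW F q m) *
             (UW F q n ⊗ₜ[F] UTz F q n + UTz F q n ⊗ₜ[F] UW F q n))
          = ((q ^ (n - m)) • (UW F q n * UW F q m)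
              - (q ^ (m - n)) • (UW F q m * UW F q n)) ⊗ₜ[F] UTz F q (m + n)
            + UTz F q (m + n) ⊗ₜ[F]
              ((q ^ (n - m)) • (UW F q n * UW F q m)
              - (q ^ (m - n)) • (UW F q m * UW F q n)) := by
            simp only [mul_add, add_mul, Algebra.TensorProduct.tmul_mul_tmul,
              hnm, hmn, hc1, hc2, smul_add, smul_sub, TensorProduct.sub_tmul,
              TensorProduct.tmul_sub, TensorProduct.add_tmul, TensorProduct.tmul_add,
              ← TensorProduct.smul_tmul', TensorProduct.tmul_smul, smul_smul]
            match_scalars <;>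
              · simp only [mul_one, one_mul, ← zpow_add₀ hq]
                try ring
                try (congr 1; ring)
        _ = _ := by
            rw [h6]
            simp
end Main
/-- There is a unique homomorphism of unital `F`-algebras
`Δ : U_q → U_q ⊗_F U_q` with `Δ(T) = T ⊗ T`, `Δ(T⁻¹) = T⁻¹ ⊗ T⁻¹`,
`Δ(L_n) = L_n ⊗ T^n + T^n ⊗ L_n` and `Δ(W_n) = W_n ⊗ T^n + T^n ⊗ W_n`. -/
theorem stmt8 (F : Type*) [Field F] [CharZero F] (q : F) (hq : q ≠ 0)
    (hqroot : ∀ k : ℕ, 0 < k → q ^ k ≠ 1) :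
    ∃! Δ : Uq F q →ₐ[F] (Uq F q ⊗[F] Uq F q),
      Δ (UT F q) = UT F q ⊗ₜ[F] UT F q ∧
      Δ (UTinv F q) = UTinv F q ⊗ₜ[F] UTinv F q ∧
      (∀ n : ℤ, Δ (UL F q n) = UL F q n ⊗ₜ[F] UTz F q n + UTz F q n ⊗ₜ[F] UL F q n) ∧
      (∀ n : ℤ, Δ (UW F q n) = UW F q n ⊗ₜ[F] UTz F q n + UTz F q n ⊗ₜ[F] UW F q n) := by
  refine ⟨RingQuot.liftAlgHom F ⟨FreeAlgebra.lift F (fgen F q), rel_check hq⟩, ?_, ?_⟩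
  · refine ⟨?_, ?_, fun n => ?_, fun n => ?_⟩ <;>
      simp [UT, UTinv, UL, UW, RingQuot.liftAlgHom_mkAlgHom_apply,
        FreeAlgebra.lift_ι_apply, fgen]
  · intro Δ' ⟨h1, h2, h3, h4⟩
    symm
    apply RingQuot.ringQuot_ext'
    apply FreeAlgebra.hom_ext
    funext x
    cases x with
    | T => simpa [UT, FreeAlgebra.lift_ι_apply, fgen,
        RingQuot.liftAlgHom_mkAlgHom_apply] using h1.symm
    | Tinv => simpa [UTinv, FreeAlgebra.lift_ι_apply, fgen,
        RingQuot.liftAlgHom_mkAlgHom_apply] using h2.symm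
    | L n => simpa [UL, FreeAlgebra.lift_ι_apply, fgen,
        RingQuot.liftAlgHom_mkAlgHom_apply] using (h3 n).symm
    | W n => simpa [UW, FreeAlgebra.lift_ι_apply, fgen,
        RingQuot.liftAlgHom_mkAlgHom_apply] using (h4 n).symm
end

section
/- The maps Δ, ε, S on U_q satisfy the antipode axioms: m ∘ (id ⊗ S) ∘ Δ = ι ∘ ε and m ∘ (S ⊗ id) ∘ Δ = ι ∘ ε as F-linear maps U_q → U_q, where m : U_q ⊗_F U_q → U_q is the multiplication map m(u ⊗ u') = u u' and ι : F → U_q is the unit embedding ι(a) = a·1. -/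
open scoped TensorProduct

set_option maxHeartbeats 1600000 in
/-- The maps `Δ, ε, S` on `U_q` satisfy the antipode axioms:
`m ∘ (id ⊗ S) ∘ Δ = ι ∘ ε` and `m ∘ (S ⊗ id) ∘ Δ = ι ∘ ε`, where `m` is the
multiplication map `U_q ⊗ U_q → U_q` and `ι : F → U_q` the unit embedding. -/
theorem stmt13 (F : Type*) [Field F] [CharZero F] (q : F) (hq : q ≠ 0)
    (hqroot : ∀ k : ℕ, 0 < k → q ^ k ≠ 1)
    (Δ : Uq F q →ₐ[F] (Uq F q ⊗[F] Uq F q))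
    (hΔT : Δ (UT F q) = UT F q ⊗ₜ[F] UT F q)
    (hΔTinv : Δ (UTinv F q) = UTinv F q ⊗ₜ[F] UTinv F q)
    (hΔL : ∀ n : ℤ, Δ (UL F q n) = UL F q n ⊗ₜ[F] UTz F q n + UTz F q n ⊗ₜ[F] UL F q n)
    (hΔW : ∀ n : ℤ, Δ (UW F q n) = UW F q n ⊗ₜ[F] UTz F q n + UTz F q n ⊗ₜ[F] UW F q n)
    (ε : Uq F q →ₐ[F] F)
    (hεT : ε (UT F q) = 1) (hεTinv : ε (UTinv F q) = 1)
    (hεL : ∀ n : ℤ, ε (UL F q n) = 0) (hεW : ∀ n : ℤ, ε (UW F q n) = 0)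
    (S : Uq F q →ₗ[F] Uq F q)
    (hSone : S 1 = 1)
    (hSmul : ∀ u v : Uq F q, S (u * v) = S v * S u)
    (hST : S (UT F q) = UTinv F q)
    (hSTinv : S (UTinv F q) = UT F q)
    (hSL : ∀ m : ℤ, S (UL F q m) = -(UTz F q (-m) * UL F q m * UTz F q (-m)))
    (hSW : ∀ m : ℤ, S (UW F q m) = -(UTz F q (-m) * UW F q m * UTz F q (-m))) :
    ∀ u : Uq F q,
      LinearMap.mul' F (Uq F q) (TensorProduct.map LinearMap.id S (Δ u))
        = algebraMap F (Uq F q) (ε u) ∧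
      LinearMap.mul' F (Uq F q) (TensorProduct.map S LinearMap.id (Δ u))
        = algebraMap F (Uq F q) (ε u) := by
  -- basic relations in U_q
  have hTT : UT F q * UTinv F q = 1 := by
    rw [UT, UTinv, ← map_mul, ← map_one (RingQuot.mkAlgHom F (WRel F q))]
    exact RingQuot.mkAlgHom_rel F WRel.r1a
  have hTT' : UTinv F q * UT F q = 1 := by
    rw [UT, UTinv, ← map_mul, ← map_one (RingQuot.mkAlgHom F (WRel F q))]
    exact RingQuot.mkAlgHom_rel F WRel.r1b
  have hpow : ∀ k : ℕ, UT F q ^ k * UTinv F q ^ k = 1 := by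
    intro k; induction k with
    | zero => simp
    | succ k ih =>
      rw [pow_succ, pow_succ', mul_assoc, ← mul_assoc (UT F q), hTT, one_mul, ih]
  have hpow' : ∀ k : ℕ, UTinv F q ^ k * UT F q ^ k = 1 := by
    intro k; induction k with
    | zero => simp
    | succ k ih =>
      rw [pow_succ, pow_succ', mul_assoc, ← mul_assoc (UTinv F q), hTT', one_mul, ih]
  have hUTzc : ∀ k : ℕ, UTz F q (k : ℤ) = UT F q ^ k := by
    intro k
    rw [UTz, Tp, if_pos (Int.ofNat_nonneg k), map_pow]
    simp [UT]
  have hUTzn : ∀ k : ℕ, UTz F q (-(k : ℤ)) = UTinv F q ^ k := by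
    intro k
    cases k with
    | zero => simpa using hUTzc 0
    | succ k =>
      rw [UTz, Tp, if_neg (by omega), map_pow, neg_neg]
      simp [UTinv]
  have hTzmul : ∀ n : ℤ, UTz F q n * UTz F q (-n) = 1 ∧ UTz F q (-n) * UTz F q n = 1 := by
    intro n
    obtain ⟨k, rfl | rfl⟩ := Int.eq_nat_or_neg n
    · rw [hUTzc, hUTzn]; exact ⟨hpow k, hpow' k⟩
    · rw [neg_neg, hUTzc, hUTzn]; exact ⟨hpow' k, hpow k⟩
  have hSpow : ∀ (a b : Uq F q), S a = b → ∀ k : ℕ, S (a ^ k) = b ^ k := by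
    intro a b hab k
    induction k with
    | zero => simpa using hSone
    | succ k ih => rw [pow_succ, hSmul, ih, hab, ← pow_succ']
  have hSTz : ∀ n : ℤ, S (UTz F q n) = UTz F q (-n) := by
    intro n
    obtain ⟨k, rfl | rfl⟩ := Int.eq_nat_or_neg n
    · rw [hUTzc, hUTzn, hSpow _ _ hST]
    · rw [neg_neg, hUTzn, hUTzc, hSpow _ _ hSTinv]
  -- key multiplicativity lemmas for the convolution maps
  have key1 : ∀ (a b : Uq F q) (Y : Uq F q ⊗[F] Uq F q),
      LinearMap.mul' F (Uq F q) (TensorProduct.map LinearMap.id S ((a ⊗ₜ[F] b) * Y))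
        = a * LinearMap.mul' F (Uq F q) (TensorProduct.map LinearMap.id S Y) * S b := by
    intro a b Y
    induction Y using TensorProduct.induction_on with
    | zero => simp
    | tmul c d =>
      simp [Algebra.TensorProduct.tmul_mul_tmul, hSmul, mul_assoc]
    | add X Y hX hY =>
      simp only [mul_add, map_add, hX, hY, add_mul, mul_add]
  have key2 : ∀ (c d : Uq F q) (Y : Uq F q ⊗[F] Uq F q),
      LinearMap.mul' F (Uq F q) (TensorProduct.map S LinearMap.id (Y * (c ⊗ₜ[F] d)))
        = S c * LinearMap.mul' F (Uq F q) (TensorProduct.map S LinearMap.id Y) * d := by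
    intro c d Y
    induction Y using TensorProduct.induction_on with
    | zero => simp
    | tmul a b =>
      simp [Algebra.TensorProduct.tmul_mul_tmul, hSmul, mul_assoc]
    | add X Y hX hY =>
      simp only [add_mul, map_add, hX, hY, mul_add]
  -- the predicate
  set P : Uq F q → Prop := fun u =>
    LinearMap.mul' F (Uq F q) (TensorProduct.map LinearMap.id S (Δ u)) = algebraMap F (Uq F q) (ε u) ∧
    LinearMap.mul' F (Uq F q) (TensorProduct.map S LinearMap.id (Δ u)) = algebraMap F (Uq F q) (ε u) with hP
  have hadd : ∀ u v : Uq F q, P u → P v → P (u + v) := by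
    intro u v hu hv
    constructor <;> simp only [map_add, hu.1, hu.2, hv.1, hv.2]
  have halg : ∀ r : F, P (algebraMap F (Uq F q) r) := by
    intro r
    have hΔa : Δ (algebraMap F (Uq F q) r) = (algebraMap F (Uq F q) r) ⊗ₜ[F] 1 := by
      rw [AlgHom.commutes, Algebra.TensorProduct.algebraMap_apply]
    have hεa : ε (algebraMap F (Uq F q) r) = r := by
      rw [AlgHom.commutes]; simp
    have hSa : S (algebraMap F (Uq F q) r) = algebraMap F (Uq F q) r := by
      rw [Algebra.algebraMap_eq_smul_one, map_smul, hSone]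
    constructor
    · rw [hΔa, TensorProduct.map_tmul, LinearMap.mul'_apply, hεa]
      simp only [LinearMap.id_coe, id_eq, hSone, mul_one]
    · rw [hΔa, TensorProduct.map_tmul, LinearMap.mul'_apply, hεa]
      simp only [LinearMap.id_coe, id_eq, hSa, mul_one]
  have hmulP : ∀ u v : Uq F q, P u → P v → P (u * v) := by
    intro u v hu hv
    constructor
    · have step : ∀ X : Uq F q ⊗[F] Uq F q,
          LinearMap.mul' F (Uq F q) (TensorProduct.map LinearMap.id S (X * Δ v))
            = ε v • LinearMap.mul' F (Uq F q) (TensorProduct.map LinearMap.id S X) := by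
        intro X
        induction X using TensorProduct.induction_on with
        | zero => simp
        | tmul a b =>
          rw [key1, hv.1, TensorProduct.map_tmul]
          simp only [LinearMap.id_coe, id_eq, LinearMap.mul'_apply, Algebra.smul_def]
          rw [← Algebra.commutes (ε v), mul_assoc]
        | add X Y hX hY => simp only [add_mul, map_add, hX, hY, smul_add]
      rw [map_mul Δ u v]
      rw [step]
      rw [hu.1]
      rw [map_mul ε u v]
      rw [Algebra.smul_def]
      rw [← map_mul]
      rw [mul_comm (ε v) (ε u)]
    · have step : ∀ Y : Uq F q ⊗[F] Uq F q,
          LinearMap.mul' F (Uq F q) (TensorProduct.map S LinearMap.id (Δ u * Y))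
            = ε u • LinearMap.mul' F (Uq F q) (TensorProduct.map S LinearMap.id Y) := by
        intro Y
        induction Y using TensorProduct.induction_on with
        | zero => simp
        | tmul c d =>
          rw [key2, hu.2, TensorProduct.map_tmul]
          simp only [LinearMap.id_coe, id_eq, LinearMap.mul'_apply, Algebra.smul_def]
          rw [← Algebra.commutes (ε u), ← mul_assoc]
        | add X Y hX hY => simp only [mul_add, map_add, hX, hY, smul_add]
      rw [map_mul Δ u v]
      rw [step]
      rw [hv.2]
      rw [map_mul ε u v]
      rw [Algebra.smul_def]
      rw [← map_mul]
  -- generators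
  have cancel1 : ∀ (a : Uq F q) (n : ℤ),
      UTz F q n * (UTz F q (-n) * a * UTz F q (-n)) = a * UTz F q (-n) := by
    intro a n; rw [← mul_assoc, ← mul_assoc, (hTzmul n).1, one_mul]
  have cancel2 : ∀ (a : Uq F q) (n : ℤ),
      UTz F q (-n) * a * UTz F q (-n) * UTz F q n = UTz F q (-n) * a := by
    intro a n; rw [mul_assoc, (hTzmul n).2, mul_one]
  have hgenT : P (UT F q) := by
    constructor
    · rw [hΔT, TensorProduct.map_tmul]
      simp only [LinearMap.id_coe, id_eq, LinearMap.mul'_apply, hST, hεT, map_one]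
      exact hTT
    · rw [hΔT, TensorProduct.map_tmul]
      simp only [LinearMap.id_coe, id_eq, LinearMap.mul'_apply, hST, hεT, map_one]
      exact hTT'
  have hgenTinv : P (UTinv F q) := by
    constructor
    · rw [hΔTinv, TensorProduct.map_tmul]
      simp only [LinearMap.id_coe, id_eq, LinearMap.mul'_apply, hSTinv, hεTinv, map_one]
      exact hTT'
    · rw [hΔTinv, TensorProduct.map_tmul]
      simp only [LinearMap.id_coe, id_eq, LinearMap.mul'_apply, hSTinv, hεTinv, map_one]
      exact hTT
  have hgenL : ∀ n : ℤ, P (UL F q n) := by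
    intro n
    constructor
    · rw [hΔL n]
      simp only [map_add, TensorProduct.map_tmul, LinearMap.id_coe, id_eq,
        LinearMap.mul'_apply, hSL n, hSTz n, hεL n, map_zero, mul_neg]
      rw [mul_neg (UTz F q n) (UTz F q (-n) * UL F q n * UTz F q (-n)), cancel1, add_neg_cancel]
    · rw [hΔL n]
      simp only [map_add, TensorProduct.map_tmul, LinearMap.id_coe, id_eq,
        LinearMap.mul'_apply, hSL n, hSTz n, hεL n, map_zero, neg_mul]
      rw [neg_mul (UTz F q (-n) * UL F q n * UTz F q (-n)) (UTz F q n), cancel2, neg_add_cancel]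
  have hgenW : ∀ n : ℤ, P (UW F q n) := by
    intro n
    constructor
    · rw [hΔW n]
      simp only [map_add, TensorProduct.map_tmul, LinearMap.id_coe, id_eq,
        LinearMap.mul'_apply, hSW n, hSTz n, hεW n, map_zero, mul_neg]
      rw [mul_neg (UTz F q n) (UTz F q (-n) * UW F q n * UTz F q (-n)), cancel1, add_neg_cancel]
    · rw [hΔW n]
      simp only [map_add, TensorProduct.map_tmul, LinearMap.id_coe, id_eq,
        LinearMap.mul'_apply, hSW n, hSTz n, hεW n, map_zero, neg_mul]
      rw [neg_mul (UTz F q (-n) * UW F q n * UTz F q (-n)) (UTz F q n), cancel2, neg_add_cancel]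
  -- induction over the presentation
  intro u
  obtain ⟨x, rfl⟩ := RingQuot.mkAlgHom_surjective F (WRel F q) u
  induction x using FreeAlgebra.induction with
  | grade0 r =>
    rw [AlgHom.commutes]
    exact halg r
  | grade1 g =>
    cases g with
    | T => exact hgenT
    | Tinv => exact hgenTinv
    | L n => exact hgenL n
    | W n => exact hgenW n
  | mul a b ha hb => rw [map_mul]; exact hmulP _ _ ha hb
  | add a b ha hb => rw [map_add]; exact hadd _ _ ha hb
end
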